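/- Masks can only switch from 1 to 0 along iterations (the number of zero entries of each mask is nondecreasing): for every i ∈ {1,…,n}, every coordinate k, and every j ≥ 1, if M^i_k(j+1) = 1 then M^i_k(j) = 1. -/
import Mathlib


open Filter

theorem stmt5
    (n d : ℕ) (hn : 1 ≤ n) (hd : 1 ≤ d)
    (Δ : ℕ → Fin n → Fin d → ℝ)
    (γ ε U : ℕ → Fin d → ℝ)
    (M : ℕ → Fin n → Fin d → ℝ)
    (lam : ℕ → Fin n → ℝ)
    (hγ : ∀ (j : ℕ) k, γ (j+1) k = Real.sign (∑ i, Δ j i k))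
    (hε : ∀ (j : ℕ) k, γ (j+1) k ≠ 0 →
      (∃ i, Real.sign (Δ j i k) = γ (j+1) k ∧ |Δ j i k| = ε (j+1) k) ∧
      (∀ i, Real.sign (Δ j i k) = γ (j+1) k → |Δ j i k| ≤ ε (j+1) k))
    (hε0 : ∀ (j : ℕ) k, γ (j+1) k = 0 → ε (j+1) k = 0)
    (hU : ∀ (j : ℕ) k, U (j+1) k = γ (j+1) k * ε (j+1) k)
    (hM : ∀ (j : ℕ) i k, M (j+1) i k = if 0 < Δ j i k * U (j+1) k then 1 else 0)
    (hden : ∀ (j : ℕ) i, ∑ k, |M (j+1) i k * U (j+1) k| ≠ 0)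
    (hlam : ∀ (j : ℕ) i,
      lam (j+1) i = (∑ k, |Δ j i k|) / (∑ k, |M (j+1) i k * U (j+1) k|))
    (hstep : ∀ (j : ℕ) i k, Δ (j+1) i k = lam (j+1) i * (M (j+1) i k * U (j+1) k)) :
    ∀ (i : Fin n) (k : Fin d) (j : ℕ), 1 ≤ j → M (j+1) i k = 1 → M j i k = 1 := by
  intro i k j hj h1
  obtain ⟨m, rfl⟩ : ∃ m, j = m + 1 := ⟨j - 1, (Nat.succ_pred_eq_of_pos hj).symm⟩
  -- From M (j+1) = 1 get positivity
  have hpos : 0 < Δ (m+1) i k * U (m+2) k := by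
    by_contra hc
    rw [hM (m+1) i k, if_neg hc] at h1
    exact zero_ne_one h1
  have hΔ : Δ (m+1) i k ≠ 0 := fun h => by simp [h] at hpos
  rw [hM m i k]
  by_cases hc : 0 < Δ m i k * U (m+1) k
  · rw [if_pos hc]
  · exfalso
    apply hΔ
    rw [hstep m i k, hM m i k, if_neg hc]
    ring
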